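/- For every real p > 1, every real n ≥ 1, and every x ∈ ℝ, one has φ_n(x) ≤ |x|^(2p), |ψ_n(x)| ≤ 2p·|x|^(2p−1), and χ_n(x) ≤ 2p(2p−1)·|x|^(2p−2). -/

import Mathlib

/-- The quadratic-growth approximation `φ_n(x)` of `|x|^{2p}` (Lemma 4.1):
`φ_n(x) = (x²)^p` if `x² ≤ n`, and `φ_n(x) = n^p + p n^(p−1)(x² − n)` otherwise.
Powers are real powers (rpow). -/
noncomputable def phiN (p n x : ℝ) : ℝ :=
  if x ^ 2 ≤ n then (x ^ 2) ^ p else n ^ p + p * n ^ (p - 1) * (x ^ 2 - n)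

/-- The derivative `ψ_n` of `φ_n` (Lemma 4.1):
`ψ_n(x) = 2p x (x²)^(p−1)` if `x² ≤ n`, and `ψ_n(x) = 2p n^(p−1) x` otherwise. -/
noncomputable def psiN (p n x : ℝ) : ℝ :=
  if x ^ 2 ≤ n then 2 * p * x * (x ^ 2) ^ (p - 1) else 2 * p * n ^ (p - 1) * x

/-- The a.e. second derivative `χ_n` of `φ_n` (Lemma 4.1):
`χ_n(x) = 2p(2p−1)(x²)^(p−1)` if `x² ≤ n`, and `χ_n(x) = 2p n^(p−1)` otherwise. -/
noncomputable def chiN (p n x : ℝ) : ℝ :=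
  if x ^ 2 ≤ n then 2 * p * (2 * p - 1) * (x ^ 2) ^ (p - 1) else 2 * p * n ^ (p - 1)

/-- For every real `p > 1`, `n ≥ 1`, and every `x ∈ ℝ`,
`φ_n(x) ≤ |x|^(2p)`, `|ψ_n(x)| ≤ 2p·|x|^(2p−1)`, and `χ_n(x) ≤ 2p(2p−1)·|x|^(2p−2)`. -/
theorem phiN_psiN_chiN_dominated (p n : ℝ) (hp : 1 < p) (hn : 1 ≤ n) (x : ℝ) :
    phiN p n x ≤ |x| ^ (2 * p) ∧ |psiN p n x| ≤ 2 * p * |x| ^ (2 * p - 1) ∧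
      chiN p n x ≤ 2 * p * (2 * p - 1) * |x| ^ (2 * p - 2) := by
  have hn0 : (0:ℝ) < n := lt_of_lt_of_le one_pos hn
  have hx2 : (0:ℝ) ≤ x ^ 2 := sq_nonneg x
  have hax : (0:ℝ) ≤ |x| := abs_nonneg x
  have hp0 : (0:ℝ) < p := lt_trans one_pos hp
  have key : |x| ^ (2 * p) = (x ^ 2) ^ p := by
    rw [← sq_abs x, ← Real.rpow_natCast |x| 2, ← Real.rpow_mul hax]
    norm_num [mul_comm]
  have key1 : |x| ^ (2 * p - 2) = (x ^ 2) ^ (p - 1) := by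
    rw [← sq_abs x, ← Real.rpow_natCast |x| 2, ← Real.rpow_mul hax]
    norm_num [mul_sub]
  have key2 : |x| ^ (2 * p - 1) = |x| * (x ^ 2) ^ (p - 1) := by
    rw [← key1, ← Real.rpow_one_add' hax (by nlinarith)]
    ring_nf
  unfold phiN psiN chiN
  by_cases h : x ^ 2 ≤ n
  · simp only [if_pos h]
    refine ⟨key.ge, ?_, by rw [key1]⟩
    rw [key2, abs_mul, abs_mul, abs_mul]
    rw [abs_of_nonneg (Real.rpow_nonneg hx2 _), abs_of_nonneg hp0.le, abs_two]
    ring_nf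
    exact le_refl _
  · push_neg at h
    have hnx : n < x ^ 2 := h
    have hnp : n ^ (p - 1) ≤ (x ^ 2) ^ (p - 1) :=
      Real.rpow_le_rpow hn0.le hnx.le (by linarith)
    have hnp0 : (0:ℝ) < n ^ (p - 1) := Real.rpow_pos_of_pos hn0 _
    simp only [if_neg (not_le.mpr hnx)]
    refine ⟨?_, ?_, ?_⟩
    · -- Bernoulli: tangent line bound
      have hs : (-1:ℝ) ≤ x ^ 2 / n - 1 := by
        have : 0 ≤ x ^ 2 / n := div_nonneg hx2 hn0.le
        linarith
      have hb := one_add_mul_self_le_rpow_one_add hs hp.le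
      have he : (1 + (x ^ 2 / n - 1)) = x ^ 2 / n := by ring
      rw [he, Real.div_rpow hx2 hn0.le] at hb
      have hb2 := mul_le_mul_of_nonneg_right hb (Real.rpow_nonneg hn0.le p)
      rw [div_mul_cancel₀ _ (Real.rpow_pos_of_pos hn0 p).ne'] at hb2
      rw [key]
      calc n ^ p + p * n ^ (p - 1) * (x ^ 2 - n)
          = (1 + p * (x ^ 2 / n - 1)) * n ^ p := by
            have : n ^ (p - 1) = n ^ p / n := by
              rw [Real.rpow_sub hn0, Real.rpow_one]
            rw [this]; field_simp
        _ ≤ (x ^ 2) ^ p := hb2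
    · rw [key2, abs_mul, abs_mul, abs_mul]
      rw [abs_of_nonneg hnp0.le, abs_of_nonneg hp0.le, abs_two]
      calc 2 * p * n ^ (p - 1) * |x| ≤ 2 * p * (x ^ 2) ^ (p - 1) * |x| := by
            apply mul_le_mul_of_nonneg_right (by nlinarith) hax
        _ = 2 * p * (|x| * (x ^ 2) ^ (p - 1)) := by ring
    · rw [key1]
      have h2p1 : (0:ℝ) ≤ 2 * p - 1 := by linarith
      calc 2 * p * n ^ (p - 1) ≤ 2 * p * (2 * p - 1) * n ^ (p - 1) :=
            mul_le_mul_of_nonneg_right (by nlinarith) hnp0.le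
        _ ≤ 2 * p * (2 * p - 1) * (x ^ 2) ^ (p - 1) :=
            mul_le_mul_of_nonneg_left hnp (by nlinarith)
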